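/- Let n ≥ 1 and m be integers with 1 ≤ m ≤ n, let j be an integer with 0 ≤ j ≤ n, and let S̄ be a real number. Then Σ_{i=0}^{j} ((i·S̄ + m − i)·C(m,i)·C(n−m, j−i))/(m·C(n,j)) = 1 + (S̄ − 1)·j/n, where C(a,b) denotes the binomial coefficient (equal to 0 when b > a). (This evaluates the average read overhead Φ_j(n) of Theorem 3.5 for a systematic (n,m) block code with average number of block accesses S̄, and in particular yields the asymptotic form Φ_j(n) → 1 + (S̄−1)·j/n.) -/

import Mathlib

open Finset

lemma vand (a b j : ℕ) :
    ∑ i ∈ Finset.range (j + 1), a.choose i * b.choose (j - i) = (a + b).choose j := by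
  rw [Nat.add_choose_eq, Finset.Nat.sum_antidiagonal_eq_sum_range_succ_mk]

lemma weighted (a b j : ℕ) :
    ∑ i ∈ Finset.range (j + 2), i * (a + 1).choose i * b.choose (j + 1 - i)
      = (a + 1) * (a + b).choose j := by
  rw [Finset.sum_range_succ']
  simp only [Nat.zero_mul, Nat.add_zero, Nat.mul_zero, Nat.zero_mul, add_zero]
  have : ∀ i, (i + 1) * (a + 1).choose (i + 1) * b.choose (j + 1 - (i + 1))
      = (a + 1) * (a.choose i * b.choose (j - i)) := by
    intro i
    have h := Nat.add_one_mul_choose_eq a i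
    rw [Nat.add_sub_add_right]
    rw [show (i + 1) * (a + 1).choose (i + 1) = (a + 1).choose (i + 1) * (i + 1) by ring, ← h]
    ring
  rw [Finset.sum_congr rfl (fun i _ => this i), ← Finset.mul_sum, vand]

theorem average_read_overhead
    (n m j : ℕ) (hm : 1 ≤ m) (hmn : m ≤ n) (hj : j ≤ n)
    (Sbar : ℝ) :
    ∑ i ∈ Finset.range (j + 1),
        ((i : ℝ) * Sbar + (m : ℝ) - i) * (m.choose i : ℝ) * ((n - m).choose (j - i) : ℝ) /
          ((m : ℝ) * (n.choose j : ℝ)) =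
      1 + (Sbar - 1) * (j : ℝ) / (n : ℝ) := by
  obtain ⟨a, rfl⟩ : ∃ a, m = a + 1 := ⟨m - 1, by omega⟩
  obtain ⟨b, rfl⟩ : ∃ b, n = a + 1 + b := ⟨n - (a + 1), by omega⟩
  have hnm : a + 1 + b - (a + 1) = b := by omega
  rw [hnm]
  have key : ∀ i : ℕ, ((i : ℝ) * Sbar + ((a + 1 : ℕ) : ℝ) - i) * ((a + 1).choose i : ℝ) *
        (b.choose (j - i) : ℝ)
      = (Sbar - 1) * ((i * (a + 1).choose i * b.choose (j - i) : ℕ) : ℝ)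
        + ((a + 1 : ℕ) : ℝ) * (((a + 1).choose i * b.choose (j - i) : ℕ) : ℝ) := by
    intro i; push_cast; ring
  simp_rw [key, ← Finset.sum_div, Finset.sum_add_distrib, ← Finset.mul_sum, ← Nat.cast_sum]
  rw [vand]
  have hC2 : ((a + 1 + b).choose j : ℝ) ≠ 0 := by
    exact Nat.cast_ne_zero.mpr (Nat.choose_pos hj).ne'
  have hn : ((a : ℝ) + 1 + b) ≠ 0 := by positivity
  cases j with
  | zero =>
    simp
    field_simp
    exact Nat.cast_add_one_ne_zero a
  | succ k =>
    rw [weighted]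
    have hkey : (a + b + 1) * (a + b).choose k = (a + b + 1).choose (k + 1) * (k + 1) :=
      Nat.add_one_mul_choose_eq (a + b) k
    have heq : a + 1 + b = a + b + 1 := by omega
    rw [heq] at hC2 ⊢
    have hkeyR : ((a : ℝ) + b + 1) * ((a + b).choose k : ℝ)
        = ((a + b + 1).choose (k + 1) : ℝ) * (k + 1) := by exact_mod_cast hkey
    push_cast at hC2 ⊢
    field_simp
    linear_combination (Sbar - 1) * hkeyR
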